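/- arXiv:2311.13875 — 2 statements merged into one kernel-verified Lean document; each statement's English description precedes it below -/
import Mathlib

section
/- Fix c > 0, κ̄ ≥ 0, K ∈ ℕ, ξ > 0, and a Hermitian positive semidefinite matrix R ∈ ℂ^{M×M} with R ≠ 0. Then the map f(δ) = tr(R ((1/(1+δ))((κ̄+1)K + κ̄) R + ξ I_M)^{-1}) is continuous and nondecreasing on [0, ∞), bounded above by tr(R)/ξ, and the fixed-point equation δ = f(δ) has a unique nonnegative solution. -/
open Matrix Set
open scoped ComplexOrder

lemma trace_key {M : ℕ} (R : Matrix (Fin M) (Fin M) ℂ) (hH : R.IsHermitian)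
    (a ξ : ℝ) (hd0 : ∀ i, (a * hH.eigenvalues i + ξ : ℝ) ≠ 0) :
    (Matrix.trace (R * ((a : ℂ) • R + (ξ : ℂ) • 1)⁻¹)).re
      = ∑ i, hH.eigenvalues i / (a * hH.eigenvalues i + ξ) := by
  set V : Matrix (Fin M) (Fin M) ℂ := (hH.eigenvectorUnitary : Matrix (Fin M) (Fin M) ℂ) with hVdef
  have hV : V * star V = 1 := (Matrix.mem_unitaryGroup_iff).mp hH.eigenvectorUnitary.2
  have hV' : star V * V = 1 := (Matrix.mem_unitaryGroup_iff').mp hH.eigenvectorUnitary.2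
  set lam := hH.eigenvalues with hlamdef
  set D : Matrix (Fin M) (Fin M) ℂ := diagonal (fun i => (lam i : ℂ)) with hDdef
  have hspec : R = V * D * star V := by
    have := hH.spectral_theorem
    rw [Unitary.conjStarAlgAut_apply] at this
    exact this
  set d : Fin M → ℂ := fun i => ((a * lam i + ξ : ℝ) : ℂ) with hddef
  have hd : ∀ i, d i ≠ 0 := fun i => by
    simpa [hddef] using Complex.ofReal_ne_zero.mpr (hd0 i)
  set B : Matrix (Fin M) (Fin M) ℂ := diagonal d with hBdef
  have hBD : (a : ℂ) • D + (ξ : ℂ) • 1 = B := by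
    rw [hBdef, hDdef, ← Matrix.diagonal_one, ← Matrix.diagonal_smul, ← Matrix.diagonal_smul,
      Matrix.diagonal_add]
    congr 1
    funext i
    simp only [Pi.add_apply, Pi.smul_apply, smul_eq_mul, hddef]
    push_cast
    ring
  have hsum : (a : ℂ) • R + (ξ : ℂ) • 1 = V * B * star V := by
    rw [hspec]
    have h1 : V * ((a : ℂ) • D + (ξ : ℂ) • 1) * star V
        = (a : ℂ) • (V * D * star V) + (ξ : ℂ) • (V * (1 : Matrix (Fin M) (Fin M) ℂ) * star V) := by
      simp [Matrix.mul_add, Matrix.add_mul, Matrix.mul_smul, Matrix.smul_mul]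
    rw [hBD] at h1
    rw [h1]
    simp [hV]
  have hBB' : B * diagonal (fun i => (d i)⁻¹) = 1 := by
    rw [hBdef, Matrix.diagonal_mul_diagonal]
    have : (fun i => d i * (d i)⁻¹) = fun _ => (1 : ℂ) := funext fun i => mul_inv_cancel₀ (hd i)
    rw [this, Matrix.diagonal_one]
  have hBinv : B⁻¹ = diagonal (fun i => (d i)⁻¹) := Matrix.inv_eq_right_inv hBB'
  have hBB : B * B⁻¹ = 1 := by rw [hBinv]; exact hBB'
  have hinv : ((a : ℂ) • R + (ξ : ℂ) • 1)⁻¹ = V * B⁻¹ * star V := by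
    apply Matrix.inv_eq_right_inv
    rw [hsum]
    have h2 : (V * B * star V) * (V * B⁻¹ * star V)
        = V * (B * ((star V * V) * (B⁻¹ * star V))) := by
      simp only [Matrix.mul_assoc]
    rw [h2, hV', one_mul, ← Matrix.mul_assoc B, hBB, one_mul, hV]
  have htr : R * ((a : ℂ) • R + (ξ : ℂ) • 1)⁻¹
      = V * (D * B⁻¹) * star V := by
    rw [hinv, hspec]
    have : V * D * star V * (V * B⁻¹ * star V) = V * (D * ((star V * V) * (B⁻¹ * star V))) := by
      simp only [Matrix.mul_assoc]
    rw [this, hV', one_mul]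
    simp only [Matrix.mul_assoc]
  rw [htr, Matrix.trace_mul_cycle, ← Matrix.mul_assoc, hV', one_mul, hBinv, hDdef,
    Matrix.diagonal_mul_diagonal, Matrix.trace_diagonal]
  rw [Complex.re_sum]
  refine Finset.sum_congr rfl fun i _ => ?_
  rw [hddef]
  rw [← Complex.ofReal_inv, ← Complex.ofReal_mul, Complex.ofReal_re, div_eq_mul_inv]

/-- The fixed-point map of the deterministic equivalent of the minimum SINR:
for `κ̄ ≥ 0`, `K ∈ ℕ`, `ξ > 0` and `R` Hermitian PSD nonzero,
`f(δ) = tr(R((1/(1+δ))((κ̄+1)K + κ̄)R + ξI)⁻¹)` is continuous and nondecreasing on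
`[0, ∞)`, bounded above by `tr(R)/ξ`, and `δ = f(δ)` has a unique nonnegative
solution. -/
theorem de_fixed_point_unique (M : ℕ) (κ : ℝ) (hκ : 0 ≤ κ) (K : ℕ) (ξ : ℝ)
    (hξ : 0 < ξ) (R : Matrix (Fin M) (Fin M) ℂ) (hR : R.PosSemidef) (hR0 : R ≠ 0)
    (f : ℝ → ℝ)
    (hf : ∀ δ, f δ = (Matrix.trace (R *
      ((((1 / (1 + δ)) * ((κ + 1) * K + κ) : ℝ) : ℂ) • R +
        (ξ : ℂ) • (1 : Matrix (Fin M) (Fin M) ℂ))⁻¹)).re) :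
    ContinuousOn f (Ici 0) ∧ MonotoneOn f (Ici 0) ∧
      (∀ δ ∈ Ici (0 : ℝ), f δ ≤ (Matrix.trace R).re / ξ) ∧
      ∃! δ : ℝ, 0 ≤ δ ∧ δ = f δ := by
  set c : ℝ := (κ + 1) * K + κ with hc
  have hc0 : 0 ≤ c := by positivity
  set lam := hR.1.eigenvalues with hlam
  have hlam0 : ∀ i, 0 ≤ lam i := hR.eigenvalues_nonneg
  have hden : ∀ δ : ℝ, 0 ≤ δ → ∀ i, 0 < c * lam i + (1 + δ) * ξ := by
    intro δ hδ i
    have := mul_nonneg hc0 (hlam0 i)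
    nlinarith
  have key : ∀ δ : ℝ, 0 ≤ δ → f δ = ∑ i, (1 + δ) * lam i / (c * lam i + (1 + δ) * ξ) := by
    intro δ hδ
    have h1δ : (0 : ℝ) < 1 + δ := by linarith
    have ha0 : 0 ≤ 1 / (1 + δ) * c := by positivity
    have hd0 : ∀ i, (1 / (1 + δ) * c * lam i + ξ : ℝ) ≠ 0 := by
      intro i
      have := mul_nonneg ha0 (hlam0 i)
      positivity
    rw [hf, trace_key R hR.1 _ _ hd0]
    refine Finset.sum_congr rfl fun i _ => ?_
    have hpos1 : (0:ℝ) < 1 / (1 + δ) * c * lam i + ξ := by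
      have := mul_nonneg ha0 (hlam0 i)
      linarith
    rw [div_eq_div_iff (ne_of_gt hpos1) (ne_of_gt (hden δ hδ i))]
    field_simp
    ring
  have htrR : (Matrix.trace R).re = ∑ i, lam i := by
    have hd0 : ∀ i, ((0:ℝ) * hR.1.eigenvalues i + 1 : ℝ) ≠ 0 := fun i => by simp
    have h := trace_key R hR.1 0 1 hd0
    have hone : (((0:ℝ)) : ℂ) • R + (((1:ℝ)) : ℂ) • (1 : Matrix (Fin M) (Fin M) ℂ) = 1 := by
      simp
    rw [hone] at h
    have hinv1 : (1 : Matrix (Fin M) (Fin M) ℂ)⁻¹ = 1 :=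
      Matrix.inv_eq_right_inv (by simp)
    rw [hinv1, Matrix.mul_one] at h
    simpa using h
  have hex : ∃ j, 0 < lam j := by
    by_contra hcon
    push_neg at hcon
    have hall : ∀ i, lam i = 0 := fun i => le_antisymm (hcon i) (hlam0 i)
    apply hR0
    rw [hR.1.spectral_theorem]
    have hdiag : Matrix.diagonal (RCLike.ofReal ∘ hR.1.eigenvalues)
        = (0 : Matrix (Fin M) (Fin M) ℂ) := by
      ext i k
      rcases eq_or_ne i k with rfl | hne
      · have h0 : hR.1.eigenvalues i = 0 := hall i
        simp [h0]
      · simp [Matrix.diagonal_apply_ne _ hne]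
    rw [hdiag, map_zero]
  obtain ⟨j, hj⟩ := hex
  have hcont : ContinuousOn f (Ici 0) := by
    apply ContinuousOn.congr (f := fun δ => ∑ i, (1 + δ) * lam i / (c * lam i + (1 + δ) * ξ))
    · apply continuousOn_finset_sum
      intro i _
      apply ContinuousOn.div
      · fun_prop
      · fun_prop
      · intro δ hδ
        exact ne_of_gt (hden δ hδ i)
    · intro δ hδ
      exact key δ hδ
  refine ⟨hcont, ?_, ?_, ?_⟩
  · intro a ha b hb hab
    rw [key a ha, key b hb]
    apply Finset.sum_le_sum
    intro i _
    rw [div_le_div_iff₀ (hden a ha i) (hden b hb i)]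
    have h1 := mul_nonneg hc0 (hlam0 i)
    have h2 := hlam0 i
    nlinarith [mul_nonneg (mul_nonneg h2 h1) (sub_nonneg.mpr hab)]
  · intro δ hδ
    rw [key δ hδ, htrR, Finset.sum_div]
    apply Finset.sum_le_sum
    intro i _
    rw [div_le_div_iff₀ (hden δ hδ i) hξ]
    have h1 := mul_nonneg hc0 (hlam0 i)
    have h2 := hlam0 i
    have hδ' : (0:ℝ) ≤ δ := hδ
    nlinarith
  · set G : ℝ → ℝ := fun δ => ∑ i, lam i / (c * lam i + (1 + δ) * ξ) with hG
    have hfG : ∀ δ : ℝ, 0 ≤ δ → f δ = (1 + δ) * G δ := by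
      intro δ hδ
      rw [key δ hδ, hG, Finset.mul_sum]
      exact Finset.sum_congr rfl fun i _ => by rw [mul_div_assoc]
    have hGanti : ∀ a b : ℝ, 0 ≤ a → a < b → G b < G a := by
      intro a b ha hab
      apply Finset.sum_lt_sum
      · intro i _
        apply div_le_div_of_nonneg_left (hlam0 i) (hden a ha i)
        nlinarith
      · refine ⟨j, Finset.mem_univ j, ?_⟩
        apply div_lt_div_of_pos_left hj (hden a ha j)
        nlinarith
    set T : ℝ := (∑ i, lam i) / ξ with hT
    have hT0 : 0 ≤ T := by
      apply div_nonneg _ (le_of_lt hξ)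
      exact Finset.sum_nonneg fun i _ => hlam0 i
    have hbound : ∀ δ : ℝ, 0 ≤ δ → f δ ≤ T := by
      intro δ hδ
      rw [key δ hδ, hT, Finset.sum_div]
      apply Finset.sum_le_sum
      intro i _
      rw [div_le_div_iff₀ (hden δ hδ i) hξ]
      have h1 := mul_nonneg hc0 (hlam0 i)
      have h2 := hlam0 i
      nlinarith
    have hφcont : ContinuousOn (fun δ => δ - f δ) (Icc 0 (T + 1)) := by
      apply ContinuousOn.sub continuousOn_id
      exact hcont.mono (fun x hx => hx.1)
    have hf0 : 0 ≤ f 0 := by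
      rw [key 0 le_rfl]
      apply Finset.sum_nonneg
      intro i _
      exact div_nonneg (by nlinarith [hlam0 i]) (le_of_lt (hden 0 le_rfl i))
    have hIVT := intermediate_value_Icc (by linarith : (0:ℝ) ≤ T + 1) hφcont
    have hmem : (0:ℝ) ∈ Icc ((fun δ => δ - f δ) 0) ((fun δ => δ - f δ) (T + 1)) := by
      simp only [Set.mem_Icc]
      constructor
      · linarith
      · have := hbound (T + 1) (by linarith)
        linarith
    obtain ⟨δ₀, hδ₀mem, hδ₀⟩ := hIVT hmem
    have h0fix : δ₀ = f δ₀ := by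
      have h' : δ₀ - f δ₀ = 0 := hδ₀
      linarith
    refine ⟨δ₀, ⟨hδ₀mem.1, h0fix⟩, ?_⟩
    rintro δ₁ ⟨hδ₁0, hδ₁⟩
    have hfix : ∀ δ : ℝ, 0 ≤ δ → δ = f δ → δ = (1 + δ) * G δ := fun δ hδ h => by
      rw [← hfG δ hδ]; exact h
    have h1 : δ₁ = (1 + δ₁) * G δ₁ := hfix δ₁ hδ₁0 hδ₁
    have h2 : δ₀ = (1 + δ₀) * G δ₀ := hfix δ₀ hδ₀mem.1 h0fix
    rcases lt_trichotomy δ₁ δ₀ with hlt | heq | hgt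
    · exfalso
      have hGlt := hGanti δ₁ δ₀ hδ₁0 hlt
      have hp : (0:ℝ) < (1 + δ₁) * (1 + δ₀) := by nlinarith [hδ₁0, hδ₀mem.1]
      have hm := mul_lt_mul_of_pos_left hGlt hp
      have e2 : (1 + δ₁) * ((1 + δ₀) * G δ₀) = (1 + δ₁) * δ₀ := by rw [← h2]
      have e1 : (1 + δ₀) * ((1 + δ₁) * G δ₁) = (1 + δ₀) * δ₁ := by rw [← h1]
      nlinarith [hm, e1, e2]
    · exact heq
    · exfalso
      have hGlt := hGanti δ₀ δ₁ hδ₀mem.1 hgt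
      have hp : (0:ℝ) < (1 + δ₀) * (1 + δ₁) := by nlinarith [hδ₁0, hδ₀mem.1]
      have hm := mul_lt_mul_of_pos_left hGlt hp
      have e2 : (1 + δ₀) * ((1 + δ₁) * G δ₁) = (1 + δ₀) * δ₁ := by rw [← h1]
      have e1 : (1 + δ₁) * ((1 + δ₀) * G δ₀) = (1 + δ₁) * δ₀ := by rw [← h2]
      nlinarith [hm, e1, e2]
end

section
/- Let â ∈ ℝ^K have positive entries, Z ∈ ℝ^{K×K} have nonnegative entries with at least one positive entry per row, and w ∈ ℝ^K have positive entries, P_max > 0. If p* maximizes min_k p_k / (â_k (Zp + 1)_k) over {p : w^T p ≤ P_max, p > 0}, then at the optimum w^T p* = P_max and all ratios p*_k / (â_k (Zp* + 1)_k) are equal. -/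
open Matrix

lemma fin_exists_min {K : ℕ} (hK : 0 < K) (f : Fin K → ℝ) :
    ∃ i, (⨅ k, f k) = f i ∧ ∀ j, f i ≤ f j := by
  have : Nonempty (Fin K) := ⟨⟨0, hK⟩⟩
  obtain ⟨i, hi⟩ := Finite.exists_min f
  exact ⟨i, le_antisymm (ciInf_le (Set.finite_range f).bddBelow i) (le_ciInf hi), hi⟩

/-- Max–min weighted SINR power control: let `â`, `w` have positive entries,
`Z` have nonnegative entries with at least one positive entry per row, `P_max > 0`.
If `p*` maximizes `min_k p_k / (â_k (Zp + 1)_k)` over the feasible set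
`{p : wᵀp ≤ P_max, p > 0}`, then at the optimum the power constraint is tight,
`wᵀp* = P_max`, and all the ratios are equal. -/
theorem max_min_power_control (K : ℕ) (hK : 0 < K) (ahat : Fin K → ℝ)
    (ha : ∀ k, 0 < ahat k) (Z : Matrix (Fin K) (Fin K) ℝ) (hZ : ∀ k i, 0 ≤ Z k i)
    (hZrow : ∀ k, ∃ i, 0 < Z k i) (w : Fin K → ℝ) (hw : ∀ k, 0 < w k)
    (Pmax : ℝ) (hP : 0 < Pmax)
    (pstar : Fin K → ℝ)
    (hfeas : w ⬝ᵥ pstar ≤ Pmax ∧ ∀ k, 0 < pstar k)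
    (hopt : ∀ p : Fin K → ℝ, w ⬝ᵥ p ≤ Pmax → (∀ k, 0 < p k) →
      (⨅ k, p k / (ahat k * (Z.mulVec p k + 1)))
        ≤ ⨅ k, pstar k / (ahat k * (Z.mulVec pstar k + 1))) :
    w ⬝ᵥ pstar = Pmax ∧
      ∀ k l : Fin K,
        pstar k / (ahat k * (Z.mulVec pstar k + 1))
          = pstar l / (ahat l * (Z.mulVec pstar l + 1)) := by
  obtain ⟨hle, hpos⟩ := hfeas
  have hne : Nonempty (Fin K) := ⟨⟨0, hK⟩⟩
  -- positivity of Zp and denominators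
  have hZp : ∀ (p : Fin K → ℝ), (∀ k, 0 < p k) → ∀ k, 0 ≤ Z.mulVec p k := by
    intro p hp k
    simp only [Matrix.mulVec, dotProduct]
    exact Finset.sum_nonneg fun i _ => mul_nonneg (hZ k i) (hp i).le
  have hden : ∀ (p : Fin K → ℝ), (∀ k, 0 < p k) → ∀ k,
      0 < ahat k * (Z.mulVec p k + 1) := by
    intro p hp k
    have := hZp p hp k
    exact mul_pos (ha k) (by linarith)
  -- scaling strictly increases every ratio
  have hscale : ∀ (p : Fin K → ℝ), (∀ k, 0 < p k) → ∀ (t : ℝ), 1 < t → ∀ k,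
      p k / (ahat k * (Z.mulVec p k + 1))
        < (t • p) k / (ahat k * (Z.mulVec (t • p) k + 1)) := by
    intro p hp t ht k
    rw [Matrix.mulVec_smul]
    simp only [Pi.smul_apply, smul_eq_mul]
    have hx := hZp p hp k
    have hd1 := hden p hp k
    have hd2 : 0 < ahat k * (t * Z.mulVec p k + 1) :=
      mul_pos (ha k) (by nlinarith)
    rw [div_lt_div_iff₀ hd1 hd2]
    nlinarith [mul_pos (mul_pos (hp k) (ha k)) (show (0:ℝ) < t - 1 by linarith)]
  have hwp : 0 < w ⬝ᵥ pstar := by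
    have : (Finset.univ : Finset (Fin K)).Nonempty := Finset.univ_nonempty
    exact Finset.sum_pos (fun i _ => mul_pos (hw i) (hpos i)) this
  -- Part 1 : tightness
  have htight : w ⬝ᵥ pstar = Pmax := by
    by_contra h
    have hlt : w ⬝ᵥ pstar < Pmax := lt_of_le_of_ne hle h
    set t := Pmax / (w ⬝ᵥ pstar) with htdef
    have ht : 1 < t := (one_lt_div hwp).mpr hlt
    have hfeas' : w ⬝ᵥ (t • pstar) ≤ Pmax := by
      rw [dotProduct_smul, smul_eq_mul, htdef, div_mul_cancel₀ _ (ne_of_gt hwp)]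
    have hpos' : ∀ k, 0 < (t • pstar) k := fun k =>
      mul_pos (lt_trans one_pos ht) (hpos k)
    have hstrict : (⨅ k, pstar k / (ahat k * (Z.mulVec pstar k + 1)))
        < ⨅ k, (t • pstar) k / (ahat k * (Z.mulVec (t • pstar) k + 1)) := by
      obtain ⟨i, hieq, himin⟩ := fin_exists_min hK
        (fun k => (t • pstar) k / (ahat k * (Z.mulVec (t • pstar) k + 1)))
      calc (⨅ k, pstar k / (ahat k * (Z.mulVec pstar k + 1)))
          ≤ pstar i / (ahat i * (Z.mulVec pstar i + 1)) :=
            ciInf_le (Set.finite_range _).bddBelow i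
        _ < (t • pstar) i / (ahat i * (Z.mulVec (t • pstar) i + 1)) :=
            hscale pstar hpos t ht i
        _ ≤ _ := le_ciInf himin
    exact absurd (hopt (t • pstar) hfeas' hpos') (not_le.mpr hstrict)
  refine ⟨htight, ?_⟩
  -- Part 2 : equal ratios
  intro k l
  by_contra hne2
  set r : Fin K → ℝ := fun i => pstar i / (ahat i * (Z.mulVec pstar i + 1)) with hr
  obtain ⟨i0, hi0eq, hi0min⟩ := fin_exists_min hK r
  set m : ℝ := ⨅ i, r i with hm
  have hmle : ∀ i, m ≤ r i := fun i => hi0eq ▸ hi0min i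
  have hmpos : 0 < m := by
    rw [hi0eq]
    exact div_pos (hpos i0) (hden pstar hpos i0)
  -- some ratio strictly above m
  have hex : ∃ j, m < r j := by
    by_contra hno
    push_neg at hno
    have heq : ∀ i, r i = m := fun i => le_antisymm (hno i) (hmle i)
    exact hne2 (by rw [show pstar k / (ahat k * (Z.mulVec pstar k + 1)) = r k from rfl,
      show pstar l / (ahat l * (Z.mulVec pstar l + 1)) = r l from rfl, heq k, heq l])
  obtain ⟨j, hj⟩ := hex
  set D : Fin K → ℝ := fun i => ahat i * (Z.mulVec pstar i + 1) with hD
  have hDpos : ∀ i, 0 < D i := hden pstar hpos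
  set p' : Fin K → ℝ := Function.update pstar j (m * D j) with hp'
  have hp'pos : ∀ i, 0 < p' i := by
    intro i
    by_cases hij : i = j
    · subst hij; rw [hp', Function.update_self]; exact mul_pos hmpos (hDpos i)
    · rw [hp', Function.update_of_ne hij]; exact hpos i
  have hp'le : ∀ i, p' i ≤ pstar i := by
    intro i
    by_cases hij : i = j
    · subst hij; rw [hp', Function.update_self]
      have := hj
      rw [hr] at this
      have := (lt_div_iff₀ (hDpos i)).mp this
      linarith
    · rw [hp', Function.update_of_ne hij]
  have hp'lt : p' j < pstar j := by
    rw [hp', Function.update_self]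
    have := (lt_div_iff₀ (hDpos j)).mp hj
    linarith
  have hZp'le : ∀ i, Z.mulVec p' i ≤ Z.mulVec pstar i := by
    intro i
    simp only [Matrix.mulVec, dotProduct]
    exact Finset.sum_le_sum fun x _ => mul_le_mul_of_nonneg_left (hp'le x) (hZ i x)
  set D' : Fin K → ℝ := fun i => ahat i * (Z.mulVec p' i + 1) with hD'
  have hD'pos : ∀ i, 0 < D' i := hden p' hp'pos
  have hD'le : ∀ i, D' i ≤ D i := fun i =>
    mul_le_mul_of_nonneg_left (by linarith [hZp'le i]) (ha i).le
  -- all new ratios ≥ m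
  have hr' : ∀ i, m ≤ p' i / D' i := by
    intro i
    rw [le_div_iff₀ (hD'pos i)]
    have h1 : m * D' i ≤ m * D i :=
      mul_le_mul_of_nonneg_left (hD'le i) hmpos.le
    by_cases hij : i = j
    · subst hij
      rw [hp', Function.update_self]; exact h1
    · rw [hp', Function.update_of_ne hij]
      have := (le_div_iff₀ (hDpos i)).mp (hmle i)
      linarith
  -- strictly slack constraint
  have hwlt : w ⬝ᵥ p' < Pmax := by
    rw [← htight]
    refine Finset.sum_lt_sum (fun i _ => mul_le_mul_of_nonneg_left (hp'le i) (hw i).le)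
      ⟨j, Finset.mem_univ j, mul_lt_mul_of_pos_left hp'lt (hw j)⟩
  have hwp' : 0 < w ⬝ᵥ p' :=
    Finset.sum_pos (fun i _ => mul_pos (hw i) (hp'pos i)) Finset.univ_nonempty
  set t := Pmax / (w ⬝ᵥ p') with htdef
  have ht : 1 < t := (one_lt_div hwp').mpr hwlt
  have hfeas' : w ⬝ᵥ (t • p') ≤ Pmax := by
    rw [dotProduct_smul, smul_eq_mul, htdef, div_mul_cancel₀ _ (ne_of_gt hwp')]
  have hpos' : ∀ i, 0 < (t • p') i := fun i => mul_pos (lt_trans one_pos ht) (hp'pos i)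
  have hstrict : m < ⨅ i, (t • p') i / (ahat i * (Z.mulVec (t • p') i + 1)) := by
    obtain ⟨i, hieq, himin⟩ := fin_exists_min hK
      (fun i => (t • p') i / (ahat i * (Z.mulVec (t • p') i + 1)))
    calc m ≤ p' i / D' i := hr' i
      _ < (t • p') i / (ahat i * (Z.mulVec (t • p') i + 1)) := hscale p' hp'pos t ht i
      _ ≤ _ := le_ciInf himin
  exact absurd (hopt (t • p') hfeas' hpos') (not_le.mpr hstrict)
end
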